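/- arXiv:math/9912106 — 3 statements merged into one kernel-verified Lean document; each statement's English description precedes it below -/
import Mathlib

section
/- Let V be a free graded module (over a ring where needed factorials act appropriately) and let Γ^k(V) ⊆ T_C^k(V) denote the submodule of elements fixed by the signed action of the symmetric group S_k. Then Γ(V) = ⊕_k Γ^k(V) is closed under the shuffle product of T_C(V), i.e., it is a subalgebra of the shuffle Hopf algebra. -/
/-- A `(j,k)`-shuffle: a permutation of `Fin (j+k)` which is increasing on the first
`j` positions and on the last `k` positions. -/
def IsShuffle (j k : ℕ) (σ : Equiv.Perm (Fin (j + k))) : Prop :=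
  (∀ a b : Fin (j + k), (a : ℕ) < (b : ℕ) → (b : ℕ) < j → σ a < σ b) ∧
  (∀ a b : Fin (j + k), j ≤ (a : ℕ) → (a : ℕ) < (b : ℕ) → σ a < σ b)

/-- The block permutation `σ ⊕ τ` of `Fin (j + k)`. -/
def blockPerm {j k : ℕ} (σ : Equiv.Perm (Fin j)) (τ : Equiv.Perm (Fin k)) :
    Equiv.Perm (Fin (j + k)) :=
  finSumFinEquiv.permCongr (Equiv.sumCongr σ τ)

namespace ShuffleAux

variable {j k : ℕ}

lemma blockPerm_castAdd (α : Equiv.Perm (Fin j)) (β : Equiv.Perm (Fin k)) (i : Fin j) :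
    blockPerm α β (Fin.castAdd k i) = Fin.castAdd k (α i) := by
  simp [blockPerm, Equiv.permCongr_apply]

lemma blockPerm_natAdd (α : Equiv.Perm (Fin j)) (β : Equiv.Perm (Fin k)) (i : Fin k) :
    blockPerm α β (Fin.natAdd j i) = Fin.natAdd j (β i) := by
  simp [blockPerm, Equiv.permCongr_apply]

lemma blockPerm_inv (α : Equiv.Perm (Fin j)) (β : Equiv.Perm (Fin k)) :
    (blockPerm α β)⁻¹ = blockPerm α⁻¹ β⁻¹ := by
  apply Equiv.ext; intro x
  induction x using Fin.addCases with
  | left i =>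
      rw [blockPerm_castAdd]
      apply (blockPerm α β).injective
      rw [← Equiv.Perm.mul_apply, mul_inv_cancel, Equiv.Perm.one_apply, blockPerm_castAdd]
      simp
  | right i =>
      rw [blockPerm_natAdd]
      apply (blockPerm α β).injective
      rw [← Equiv.Perm.mul_apply, mul_inv_cancel, Equiv.Perm.one_apply, blockPerm_natAdd]
      simp

/-- The image of the first block under `ρ`. -/
def blockA (ρ : Equiv.Perm (Fin (j + k))) : Finset (Fin (j + k)) :=
  Finset.image (fun i : Fin j => ρ (Fin.castAdd k i)) Finset.univ

lemma card_blockA (ρ : Equiv.Perm (Fin (j + k))) : (blockA ρ).card = j := by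
  rw [blockA, Finset.card_image_of_injective]
  · simp
  · intro a b h
    have h2 := congrArg Fin.val (ρ.injective h)
    simp only [Fin.coe_castAdd] at h2
    exact Fin.ext h2

lemma card_blockA_compl (ρ : Equiv.Perm (Fin (j + k))) : (blockA ρ)ᶜ.card = k := by
  rw [Finset.card_compl, card_blockA, Fintype.card_fin]
  omega

/-- The shuffle part of a permutation. -/
noncomputable def sp (ρ : Equiv.Perm (Fin (j + k))) : Equiv.Perm (Fin (j + k)) :=
  Equiv.ofBijective (fun i =>
    if h : (i : ℕ) < j then (blockA ρ).orderEmbOfFin (card_blockA ρ) ⟨i, h⟩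
    else (blockA ρ)ᶜ.orderEmbOfFin (card_blockA_compl ρ)
      ⟨(i : ℕ) - j, by have := i.isLt; omega⟩)
    (Finite.injective_iff_bijective.mp (by
      intro a b hab
      by_cases ha : (a : ℕ) < j <;> by_cases hb : (b : ℕ) < j <;>
        simp only [ha, hb, dif_pos, dif_neg, not_false_iff] at hab
      · have h2 := congrArg Fin.val
          ((Finset.orderEmbOfFin (blockA ρ) (card_blockA ρ)).injective hab)
        simp only at h2
        exact Fin.ext h2
      · exact absurd (hab ▸ Finset.orderEmbOfFin_mem (blockA ρ) (card_blockA ρ) _)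
          (Finset.mem_compl.mp (Finset.orderEmbOfFin_mem _ (card_blockA_compl ρ) _))
      · exact absurd (hab ▸ Finset.orderEmbOfFin_mem ((blockA ρ)ᶜ) (card_blockA_compl ρ) _)
          (by simpa using Finset.orderEmbOfFin_mem (blockA ρ) (card_blockA ρ) _)
      · have := (Finset.orderEmbOfFin ((blockA ρ)ᶜ) (card_blockA_compl ρ)).injective hab
        have h2 := congrArg Fin.val this
        simp only at h2
        exact Fin.ext (by omega)))

lemma sp_apply_lt (ρ : Equiv.Perm (Fin (j + k))) (i : Fin (j + k)) (h : (i : ℕ) < j) :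
    sp ρ i = (blockA ρ).orderEmbOfFin (card_blockA ρ) ⟨i, h⟩ := by
  simp [sp, Equiv.ofBijective_apply, dif_pos h]

lemma sp_apply_ge (ρ : Equiv.Perm (Fin (j + k))) (i : Fin (j + k)) (h : ¬ (i : ℕ) < j) :
    sp ρ i = (blockA ρ)ᶜ.orderEmbOfFin (card_blockA_compl ρ)
      ⟨(i : ℕ) - j, by have := i.isLt; omega⟩ := by
  simp [sp, Equiv.ofBijective_apply, dif_neg h]

lemma sp_shuffle (ρ : Equiv.Perm (Fin (j + k))) : IsShuffle j k (sp ρ) := by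
  constructor
  · intro a b hab hb
    rw [sp_apply_lt ρ a (lt_trans hab hb), sp_apply_lt ρ b hb]
    exact ((blockA ρ).orderEmbOfFin (card_blockA ρ)).strictMono (by exact hab)
  · intro a b ha hab
    rw [sp_apply_ge ρ a (by omega), sp_apply_ge ρ b (by omega)]
    exact ((blockA ρ)ᶜ.orderEmbOfFin (card_blockA_compl ρ)).strictMono
      (show ((a:ℕ) - j) < ((b:ℕ) - j) by omega)

lemma sp_symm_lt (ρ : Equiv.Perm (Fin (j + k))) (x : Fin (j + k)) (hx : x ∈ blockA ρ) :
    ((sp ρ)⁻¹ x : ℕ) < j := by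
  by_contra h
  have : sp ρ ((sp ρ)⁻¹ x) = x := Equiv.apply_symm_apply _ _
  rw [sp_apply_ge ρ _ h] at this
  have := this ▸ Finset.orderEmbOfFin_mem ((blockA ρ)ᶜ) (card_blockA_compl ρ) _
  exact (Finset.mem_compl.mp this) hx

/-- Block decomposition of a permutation preserving the first block. -/
lemma blockDecomp (c : Equiv.Perm (Fin (j + k)))
    (hc : ∀ i : Fin (j + k), (i : ℕ) < j → (c i : ℕ) < j) :
    ∃ (α : Equiv.Perm (Fin j)) (β : Equiv.Perm (Fin k)), c = blockPerm α β := by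
  have hg_inj : Function.Injective
      (fun i : Fin j => (⟨(c (Fin.castAdd k i) : ℕ), hc _ (by simp)⟩ : Fin j)) := by
    intro a b h
    have h1' := congrArg Fin.val h
    simp only at h1'
    have h1 : (c (Fin.castAdd k a) : ℕ) = (c (Fin.castAdd k b) : ℕ) := h1'
    have h2 := congrArg Fin.val (c.injective (Fin.ext h1))
    simp only [Fin.coe_castAdd] at h2
    exact Fin.ext h2
  set g : Fin j → Fin j := fun i => ⟨(c (Fin.castAdd k i) : ℕ), hc _ (by simp)⟩ with hg
  have hg_surj : Function.Surjective g := Finite.injective_iff_surjective.mp hg_inj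
  -- second block goes to second block
  have hc2 : ∀ i : Fin k, j ≤ (c (Fin.natAdd j i) : ℕ) := by
    intro i
    by_contra h
    push_neg at h
    obtain ⟨m, hm⟩ := hg_surj ⟨(c (Fin.natAdd j i) : ℕ), h⟩
    have hmv' := congrArg Fin.val hm
    simp only [hg] at hmv'
    have : c (Fin.castAdd k m) = c (Fin.natAdd j i) := Fin.ext hmv'

    have := c.injective this
    have := congrArg Fin.val this
    simp at this
    omega
  have hb_inj : Function.Injective (fun i : Fin k =>
      (⟨(c (Fin.natAdd j i) : ℕ) - j, by have := (c (Fin.natAdd j i)).isLt; have := hc2 i; omega⟩ : Fin k)) := by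
    intro a b h
    have h1 := congrArg Fin.val h
    simp only at h1
    have ha := hc2 a; have hb := hc2 b
    have h2 : (c (Fin.natAdd j a) : ℕ) = (c (Fin.natAdd j b) : ℕ) := by omega
    have h3 := c.injective (Fin.ext h2)
    have := congrArg Fin.val h3
    simp at this
    exact Fin.ext this
  refine ⟨Equiv.ofBijective g (Finite.injective_iff_bijective.mp hg_inj),
    Equiv.ofBijective _ (Finite.injective_iff_bijective.mp hb_inj), ?_⟩
  apply Equiv.ext; intro x
  induction x using Fin.addCases with
  | left i =>
      rw [blockPerm_castAdd]
      simp only [Equiv.ofBijective_apply]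
      exact (Fin.ext (by simp [hg])).symm
  | right i =>
      rw [blockPerm_natAdd]
      simp only [Equiv.ofBijective_apply]
      refine (Fin.ext ?_).symm
      have := hc2 i
      simp only [Fin.coe_natAdd]
      omega

lemma sp_factor (ρ : Equiv.Perm (Fin (j + k))) :
    ∃ (α : Equiv.Perm (Fin j)) (β : Equiv.Perm (Fin k)),
      ρ = sp ρ * blockPerm α β := by
  have hc : ∀ i : Fin (j + k), (i : ℕ) < j → (((sp ρ)⁻¹ * ρ) i : ℕ) < j := by
    intro i hi
    have hmem : ρ i ∈ blockA ρ := by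
      have : i = Fin.castAdd k ⟨(i : ℕ), hi⟩ := Fin.ext rfl
      rw [blockA, Finset.mem_image]
      exact ⟨⟨(i : ℕ), hi⟩, Finset.mem_univ _, by rw [← this]⟩
    exact sp_symm_lt ρ (ρ i) hmem
  obtain ⟨α, β, hab⟩ := blockDecomp ((sp ρ)⁻¹ * ρ) hc
  exact ⟨α, β, by rw [← hab]; group⟩

lemma sp_unique (ρ σ : Equiv.Perm (Fin (j + k)))
    (α : Equiv.Perm (Fin j)) (β : Equiv.Perm (Fin k))
    (hσ : IsShuffle j k σ) (h : ρ = σ * blockPerm α β) : sp ρ = σ := by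
  -- blockA ρ = image of σ ∘ castAdd
  have himg : blockA ρ = Finset.image (fun i : Fin j => σ (Fin.castAdd k i)) Finset.univ := by
    rw [blockA]
    apply Finset.Subset.antisymm
    · intro x hx
      rw [Finset.mem_image] at hx ⊢
      obtain ⟨i, _, hi⟩ := hx
      refine ⟨α i, Finset.mem_univ _, ?_⟩
      rw [← hi, h]
      simp [Equiv.Perm.mul_apply, blockPerm_castAdd]
    · intro x hx
      rw [Finset.mem_image] at hx ⊢
      obtain ⟨i, _, hi⟩ := hx
      refine ⟨α⁻¹ i, Finset.mem_univ _, ?_⟩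
      rw [h]
      simp [Equiv.Perm.mul_apply, blockPerm_castAdd, ← hi]
  have hmono1 : StrictMono (fun i : Fin j => σ (Fin.castAdd k i)) := by
    intro a b hab
    exact hσ.1 _ _ hab b.isLt
  have hmem1 : ∀ i : Fin j, σ (Fin.castAdd k i) ∈ blockA ρ := by
    intro i; rw [himg, Finset.mem_image]; exact ⟨i, Finset.mem_univ _, rfl⟩
  have heq1 := Finset.orderEmbOfFin_unique (card_blockA ρ) hmem1 hmono1
  have hmono2 : StrictMono (fun i : Fin k => σ (Fin.natAdd j i)) := by
    intro a b hab
    have hab' : (a : ℕ) < (b : ℕ) := hab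
    exact hσ.2 _ _ (Nat.le_add_right j (a : ℕ)) (by simp only [Fin.coe_natAdd]; omega)
  have hmem2 : ∀ i : Fin k, σ (Fin.natAdd j i) ∈ (blockA ρ)ᶜ := by
    intro i
    rw [Finset.mem_compl, himg, Finset.mem_image]
    rintro ⟨m, -, hm⟩
    have := σ.injective hm
    have := congrArg Fin.val this
    simp at this
    omega
  have heq2 := Finset.orderEmbOfFin_unique (card_blockA_compl ρ) hmem2 hmono2
  apply Equiv.ext; intro x
  induction x using Fin.addCases with
  | left i =>
      have h1 : ((Fin.castAdd k i : Fin (j + k)) : ℕ) < j := i.isLt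
      rw [sp_apply_lt ρ _ h1]
      have h2 := congrFun heq1 ⟨((Fin.castAdd k i : Fin (j + k)) : ℕ), h1⟩
      rw [← h2]
      exact congrArg σ (congrArg (Fin.castAdd k) (Fin.ext rfl))
  | right i =>
      have h1 : ¬ ((Fin.natAdd j i : Fin (j + k)) : ℕ) < j := by simp
      rw [sp_apply_ge ρ _ h1]
      have h2 := congrFun heq2 ⟨((Fin.natAdd j i : Fin (j + k)) : ℕ) - j,
        by have := i.isLt; simp only [Fin.coe_natAdd]; omega⟩
      rw [← h2]
      exact congrArg σ (congrArg (Fin.natAdd j) (Fin.ext (by simp)))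

end ShuffleAux

open scoped Classical in
/-- Let `V` be a free graded module and `Γ^k(V) ⊆ T_C^k(V)` the fixed
points of the signed action of the symmetric group `S_k`.  Then
`Γ(V) = ⊕_k Γ^k(V)` is closed under the shuffle product of `T_C(V)`.  Here the
word-length components `T k = T_C^k(V)` carry any (e.g. the Koszul-signed)
linear `S_k`-action `act`, `conc` is the concatenation pairing, compatible with
block permutations, and the shuffle product of `x` and `y` is
`Σ_{(j,k)-shuffles σ} σ · (x·y)`.  The claim: the shuffle product of two invariant
tensors is invariant. -/
theorem shuffle_of_invariants_is_invariant
    {R : Type*} [CommRing R] (T : ℕ → Type*)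
    [∀ k, AddCommGroup (T k)] [∀ k, Module R (T k)]
    -- the (signed) action of the symmetric group on each word-length component
    (act : ∀ k : ℕ, Equiv.Perm (Fin k) → T k →ₗ[R] T k)
    (hact_one : ∀ k, act k 1 = LinearMap.id)
    (hact_mul : ∀ k σ τ, act k (σ * τ) = act k σ ∘ₗ act k τ)
    -- concatenation of tensor words
    (conc : ∀ j k : ℕ, T j →ₗ[R] T k →ₗ[R] T (j + k))
    -- compatibility of the action with concatenation and block permutations
    (hblock : ∀ (j k : ℕ) (σ : Equiv.Perm (Fin j)) (τ : Equiv.Perm (Fin k))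
        (x : T j) (y : T k),
      act (j + k) (blockPerm σ τ) (conc j k x y) = conc j k (act j σ x) (act k τ y))
    (j k : ℕ) (x : T j) (y : T k)
    (hx : ∀ σ : Equiv.Perm (Fin j), act j σ x = x)
    (hy : ∀ τ : Equiv.Perm (Fin k), act k τ y = y) :
    ∀ π : Equiv.Perm (Fin (j + k)),
      act (j + k) π
        (∑ σ ∈ Finset.univ.filter (IsShuffle j k), act (j + k) σ (conc j k x y))
      = ∑ σ ∈ Finset.univ.filter (IsShuffle j k), act (j + k) σ (conc j k x y) := by
  intro π
  set z := conc j k x y with hz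
  -- acting by any permutation with a block factorization through a shuffle
  have key : ∀ ρ : Equiv.Perm (Fin (j + k)), act (j + k) ρ z = act (j + k) (ShuffleAux.sp ρ) z := by
    intro ρ
    obtain ⟨α, β, hfac⟩ := ShuffleAux.sp_factor ρ
    conv_lhs => rw [hfac]
    rw [hact_mul, LinearMap.comp_apply, hz, hblock, hx, hy]
  rw [map_sum]
  have step1 : ∀ σ ∈ Finset.univ.filter (IsShuffle j k),
      act (j + k) π (act (j + k) σ z) = act (j + k) (ShuffleAux.sp (π * σ)) z := by
    intro σ _
    have h1 : act (j + k) π (act (j + k) σ z) = act (j + k) (π * σ) z := by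
      rw [hact_mul, LinearMap.comp_apply]
    rw [h1, key]
  rw [Finset.sum_congr rfl step1]
  refine Finset.sum_nbij' (fun σ => ShuffleAux.sp (π * σ)) (fun τ => ShuffleAux.sp (π⁻¹ * τ))
    ?_ ?_ ?_ ?_ ?_
  · intro a _
    simp only [Finset.mem_filter, Finset.mem_univ, true_and]
    exact ShuffleAux.sp_shuffle _
  · intro a _
    simp only [Finset.mem_filter, Finset.mem_univ, true_and]
    exact ShuffleAux.sp_shuffle _
  · intro a ha
    simp only [Finset.mem_filter, Finset.mem_univ, true_and] at ha
    obtain ⟨α, β, hfac⟩ := ShuffleAux.sp_factor (π * a)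
    refine ShuffleAux.sp_unique _ _ α⁻¹ β⁻¹ ha ?_
    rw [← ShuffleAux.blockPerm_inv]
    have hsp : ShuffleAux.sp (π * a) = (π * a) * (blockPerm α β)⁻¹ := by
      rw [eq_mul_inv_iff_mul_eq, ← hfac]
    beta_reduce
    rw [hsp]
    group
  · intro a ha
    simp only [Finset.mem_filter, Finset.mem_univ, true_and] at ha
    obtain ⟨α, β, hfac⟩ := ShuffleAux.sp_factor (π⁻¹ * a)
    refine ShuffleAux.sp_unique _ _ α⁻¹ β⁻¹ ha ?_
    rw [← ShuffleAux.blockPerm_inv]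
    have hsp : ShuffleAux.sp (π⁻¹ * a) = (π⁻¹ * a) * (blockPerm α β)⁻¹ := by
      rw [eq_mul_inv_iff_mul_eq, ← hfac]
    beta_reduce
    rw [hsp]
    group
  · intro a _
    rfl
end

section
/- Let (UL, ∂) be a differential graded Hopf algebra over F_p of finite type whose underlying Hopf algebra is the universal enveloping algebra of a connected graded Lie algebra L, so that (UL)^♯ ≅ ΓV as an algebra for V = L^♯. If the dual differential ∂^♯ on ΓV is a Γ-derivation, then ∂(L) ⊆ L, i.e., L is a sub-differential-graded-Lie-algebra of (UL, ∂). -/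
/-- Let `(UL, ∂)` be a differential graded Hopf algebra over
`F_p = ZMod p` of finite type whose underlying Hopf algebra is the universal
enveloping algebra of a connected graded Lie algebra `L` (modelled by a submodule
`L ⊆ UL`), so that the graded dual `(UL)^♯` is identified, via a perfect pairing
`P : ΓV ⊗ UL → F_p`, with the free divided powers algebra `ΓV` on `V = L^♯`; the
inclusion `L ↪ UL` is dual to the projection `π : ΓV → V`, so that `L` is exactly
the annihilator of `ker π`, and `ker π` is spanned by `1`, products of two elements
of the augmentation ideal, and higher divided powers `γ^k(v)`, `k ≥ 2`. If the dual
differential `∂^♯` on `ΓV` is a Γ-derivation, then `∂(L) ⊆ L`, i.e. `L` is a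
sub-differential-graded-Lie-algebra of `(UL, ∂)`. -/
theorem dgl_sub_of_dual_gamma_derivation
    (p : ℕ) [Fact p.Prime]
    {A G V : Type*}                    -- A = UL, G = ΓV, V = L^♯
    [Ring A] [Algebra (ZMod p) A] [Module.Finite (ZMod p) A]
    [CommRing G] [Algebra (ZMod p) G]
    [AddCommGroup V] [Module (ZMod p) V]
    (L : Submodule (ZMod p) A)         -- the graded Lie algebra inside UL
    (dA : A →ₗ[ZMod p] A)               -- the differential of UL
    (hdsq : ∀ a, dA (dA a) = 0)
    (hdLeib : ∀ a b : A, ∃ s : ℤˣ, dA (a * b) = dA a * b + (s : ℤ) • (a * dA b))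
    (P : G →ₗ[ZMod p] Module.Dual (ZMod p) A)  -- the pairing (UL)^♯ ≅ ΓV
    (hP : Function.Bijective P)
    (π : G →ₗ[ZMod p] V)               -- projection ΓV → V
    (I : Ideal G)                      -- augmentation ideal of ΓV
    (Vev : Set G)                      -- elements of V ⊆ ΓV of even nonzero degree
    (γ : ℕ → G → G)                    -- divided power operations
    (hVI : ∀ v ∈ Vev, v ∈ I)
    (hγI : ∀ v ∈ Vev, ∀ k : ℕ, 1 ≤ k → γ k v ∈ I)
    (hker : LinearMap.ker π =
      Submodule.span (ZMod p) ({(1 : G)}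
        ∪ {x : G | ∃ u ∈ I, ∃ w ∈ I, x = u * w}
        ∪ {x : G | ∃ v ∈ Vev, ∃ k : ℕ, 2 ≤ k ∧ x = γ k v}))
    -- L is the annihilator of ker π under the pairing
    (hL : ∀ a : A, a ∈ L ↔ ∀ g ∈ LinearMap.ker π, P g a = 0)
    (θ : G →ₗ[ZMod p] G)               -- the dual differential ∂^♯
    (hθdual : ∀ (g : G) (a : A), ∃ s : ℤˣ, P (θ g) a = (s : ℤ) • P g (dA a))
    -- ∂^♯ is a Γ-derivation:
    (hone : θ 1 = 0)
    (hLeib : ∀ u w : G, ∃ s : ℤˣ, θ (u * w) = θ u * w + (s : ℤ) • (u * θ w))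
    (hθγ : ∀ v ∈ Vev, ∀ k : ℕ, 1 ≤ k → θ (γ k v) = θ v * γ (k - 1) v)
    (hθI : ∀ u ∈ I, θ u ∈ I) :
    ∀ a ∈ L, dA a ∈ L := by
  intro a ha
  rw [hL]
  intro g hg
  -- Step 1: θ maps ker π into ker π
  have hθker : θ g ∈ LinearMap.ker π := by
    rw [hker] at hg ⊢
    induction hg using Submodule.span_induction with
    | mem x hx =>
      rcases hx with (hx | hx) | hx
      · rw [Set.mem_singleton_iff] at hx
        subst hx
        rw [hone]
        exact Submodule.zero_mem _
      · obtain ⟨u, hu, w, hw, rfl⟩ := hx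
        obtain ⟨s, hs⟩ := hLeib u w
        rw [hs]
        refine Submodule.add_mem _ ?_ (zsmul_mem ?_ _)
        · exact Submodule.subset_span (Or.inl (Or.inr ⟨θ u, hθI u hu, w, hw, rfl⟩))
        · exact Submodule.subset_span (Or.inl (Or.inr ⟨u, hu, θ w, hθI w hw, rfl⟩))
      · obtain ⟨v, hv, k, hk, rfl⟩ := hx
        rw [hθγ v hv k (le_trans one_le_two hk)]
        refine Submodule.subset_span (Or.inl (Or.inr ⟨θ v, hθI v (hVI v hv),
          γ (k - 1) v, hγI v hv (k - 1) (by omega), rfl⟩))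
    | zero => simpa using Submodule.zero_mem _
    | add x y _ _ hx hy => rw [map_add]; exact Submodule.add_mem _ hx hy
    | smul c x _ hx => rw [map_smul]; exact Submodule.smul_mem _ c hx
  -- Step 2: use the duality of θ and dA
  obtain ⟨s, hs⟩ := hθdual g a
  have h0 : P (θ g) a = 0 := (hL a).mp ha (θ g) hθker
  rw [h0] at hs
  rcases Int.units_eq_one_or s with rfl | rfl <;> simpa using hs.symm
end

section
/- Let L_ab(a,b,c) be the abelian graded Lie algebra over F_p with |a| = 2np−1, |b| = 2np, |c| = 2n (n ≥ 1, p odd). The Hopf algebra automorphism ψ of U L_ab(a,b,c) determined by a ↦ a, c ↦ c, b ↦ b + c^p is a well-defined Hopf algebra isomorphism, but is not of the form Uθ for any Lie algebra endomorphism θ of L_ab(a,b,c). -/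
set_option synthInstance.maxHeartbeats 400000
set_option maxHeartbeats 1000000

open TensorProduct

/-- `U L_ab(a,b,c) = Λ(a) ⊗ F_p[b,c]`: the free graded-commutative Hopf algebra over
`F_p` on a primitive generator `a` of odd degree `2np−1` and primitive generators
`b, c` of even degrees `2np`, `2n`; modelled as `F_p[b,c] ⊕ F_p[b,c]·a`
(so `a² = 0`). Here `b = inl (X 0)`, `c = inl (X 1)`, `a = inr 1`. -/
noncomputable abbrev ULabc (p : ℕ) : Type :=
  TrivSqZeroExt (MvPolynomial (Fin 2) (ZMod p)) (MvPolynomial (Fin 2) (ZMod p))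

/-- The algebra endomorphism of `F_p[b,c]` with `b ↦ b + c^p`, `c ↦ c`. -/
noncomputable def sigmaBC (p : ℕ) :
    MvPolynomial (Fin 2) (ZMod p) →ₐ[ZMod p] MvPolynomial (Fin 2) (ZMod p) :=
  MvPolynomial.aeval ![MvPolynomial.X 0 + (MvPolynomial.X 1) ^ p, MvPolynomial.X 1]

/-- The map `ψ : U L_ab(a,b,c) → U L_ab(a,b,c)` determined by
`a ↦ a`, `b ↦ b + c^p`, `c ↦ c`. -/
noncomputable def psiHopf (p : ℕ) : ULabc p →ₗ[ZMod p] ULabc p :=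
  ((Algebra.linearMap (MvPolynomial (Fin 2) (ZMod p)) (ULabc p)).restrictScalars
      (ZMod p)) ∘ₗ (sigmaBC p).toLinearMap ∘ₗ
    (TrivSqZeroExt.fstHom (ZMod p) (MvPolynomial (Fin 2) (ZMod p))
      (MvPolynomial (Fin 2) (ZMod p))).toLinearMap
  + ((TrivSqZeroExt.inrHom (MvPolynomial (Fin 2) (ZMod p))
        (MvPolynomial (Fin 2) (ZMod p))).restrictScalars (ZMod p)) ∘ₗ
      (sigmaBC p).toLinearMap ∘ₗ
      ((TrivSqZeroExt.sndHom (MvPolynomial (Fin 2) (ZMod p))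
        (MvPolynomial (Fin 2) (ZMod p))).restrictScalars (ZMod p))

/-- The subspace `L_ab(a,b,c) ⊆ U L_ab(a,b,c)` spanned by the generators. -/
noncomputable def Labc (p : ℕ) : Submodule (ZMod p) (ULabc p) :=
  Submodule.span (ZMod p)
    {TrivSqZeroExt.inr 1, TrivSqZeroExt.inl (MvPolynomial.X 0),
      TrivSqZeroExt.inl (MvPolynomial.X 1)}

lemma psiHopf_fst (p : ℕ) (z : ULabc p) : (psiHopf p z).fst = sigmaBC p z.fst := by
  simp [psiHopf, TrivSqZeroExt.algebraMap_eq_inl']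
lemma psiHopf_snd (p : ℕ) (z : ULabc p) : (psiHopf p z).snd = sigmaBC p z.snd := by
  simp [psiHopf, TrivSqZeroExt.algebraMap_eq_inl']

lemma psiHopf_one (p : ℕ) : psiHopf p 1 = 1 := by
  apply TrivSqZeroExt.ext <;> simp [psiHopf_fst, psiHopf_snd]

lemma psiHopf_mul (p : ℕ) (z w : ULabc p) :
    psiHopf p (z * w) = psiHopf p z * psiHopf p w := by
  apply TrivSqZeroExt.ext
  · rw [psiHopf_fst, TrivSqZeroExt.fst_mul, TrivSqZeroExt.fst_mul,
      psiHopf_fst, psiHopf_fst, map_mul]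
  · rw [psiHopf_snd, TrivSqZeroExt.snd_mul, TrivSqZeroExt.snd_mul,
      psiHopf_fst, psiHopf_fst, psiHopf_snd, psiHopf_snd]
    simp [smul_eq_mul, MulOpposite.smul_eq_mul_unop]

noncomputable def tauBC (p : ℕ) :
    MvPolynomial (Fin 2) (ZMod p) →ₐ[ZMod p] MvPolynomial (Fin 2) (ZMod p) :=
  MvPolynomial.aeval ![MvPolynomial.X 0 - (MvPolynomial.X 1) ^ p, MvPolynomial.X 1]

lemma sigma_tau (p : ℕ) (f : MvPolynomial (Fin 2) (ZMod p)) :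
    sigmaBC p (tauBC p f) = f := by
  have : (sigmaBC p).comp (tauBC p) = AlgHom.id _ _ := by
    apply MvPolynomial.algHom_ext
    intro i
    fin_cases i <;> simp [sigmaBC, tauBC]
  exact AlgHom.congr_fun this f

lemma tau_sigma (p : ℕ) (f : MvPolynomial (Fin 2) (ZMod p)) :
    tauBC p (sigmaBC p f) = f := by
  have : (tauBC p).comp (sigmaBC p) = AlgHom.id _ _ := by
    apply MvPolynomial.algHom_ext
    intro i
    fin_cases i <;> simp [sigmaBC, tauBC]
  exact AlgHom.congr_fun this f

noncomputable def psiInv (p : ℕ) : ULabc p → ULabc p :=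
  fun z => ⟨tauBC p z.fst, tauBC p z.snd⟩

lemma psiHopf_bij (p : ℕ) : Function.Bijective (psiHopf p) := by
  refine Function.bijective_iff_has_inverse.2 ⟨psiInv p, fun z => ?_, fun z => ?_⟩
  · apply TrivSqZeroExt.ext <;>
      simp [psiInv, psiHopf_fst, psiHopf_snd, sigma_tau, tau_sigma]
  · apply TrivSqZeroExt.ext <;> simp only [psiHopf_fst, psiHopf_snd] <;>
      simp [psiInv, sigma_tau, tau_sigma]

open MvPolynomial TrivSqZeroExt in
lemma psiHopf_a (p : ℕ) : psiHopf p (inr 1 : ULabc p) = inr 1 := by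
  apply TrivSqZeroExt.ext <;> simp [psiHopf_fst, psiHopf_snd]

open MvPolynomial TrivSqZeroExt in
lemma psiHopf_b (p : ℕ) : psiHopf p (inl (X 0) : ULabc p) = inl (X 0 + X 1 ^ p) := by
  apply TrivSqZeroExt.ext <;> simp [psiHopf_fst, psiHopf_snd, sigmaBC]

open MvPolynomial TrivSqZeroExt in
lemma psiHopf_c (p : ℕ) : psiHopf p (inl (X 1) : ULabc p) = inl (X 1) := by
  apply TrivSqZeroExt.ext <;> simp [psiHopf_fst, psiHopf_snd, sigmaBC]

noncomputable def PsiAlg (p : ℕ) : ULabc p →ₐ[ZMod p] ULabc p :=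
  AlgHom.ofLinearMap (psiHopf p) (psiHopf_one p) (psiHopf_mul p)

open MvPolynomial TrivSqZeroExt in
lemma adjoin_top (p : ℕ) :
    Algebra.adjoin (ZMod p) ({inr 1, inl (X 0), inl (X 1)} : Set (ULabc p)) = ⊤ := by
  rw [eq_top_iff]
  rintro z -
  have hz : z = inl z.fst + inl z.snd * inr 1 := by
    apply TrivSqZeroExt.ext <;> simp
  rw [hz]
  have hinl : ∀ f : MvPolynomial (Fin 2) (ZMod p),
      (inl f : ULabc p) ∈ Algebra.adjoin (ZMod p)
        ({inr 1, inl (X 0), inl (X 1)} : Set (ULabc p)) := by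
    intro f
    have hf : f ∈ Algebra.adjoin (ZMod p)
        (Set.range (X : Fin 2 → MvPolynomial (Fin 2) (ZMod p))) := by
      rw [MvPolynomial.adjoin_range_X]; trivial
    have := Algebra.adjoin_le (R := ZMod p)
      (s := Set.range (X : Fin 2 → MvPolynomial (Fin 2) (ZMod p)))
      (S := (Algebra.adjoin (ZMod p)
        ({inr 1, inl (X 0), inl (X 1)} : Set (ULabc p))).comap
        (inlAlgHom (ZMod p) _ _)) ?_ hf
    · simpa using this
    · rintro x ⟨i, rfl⟩
      fin_cases i <;>
        · simp only [Subalgebra.mem_comap, inlAlgHom_apply]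
          exact Algebra.subset_adjoin (by simp)
  exact add_mem (hinl _) (mul_mem (hinl _)
    (Algebra.subset_adjoin (by simp)))

noncomputable def epsU (p : ℕ) : ULabc p →ₐ[ZMod p] ZMod p :=
  (MvPolynomial.aeval (fun _ => (0 : ZMod p))).comp
    (TrivSqZeroExt.fstHom (ZMod p) _ _)

lemma tensor_nontrivial (p : ℕ) [Fact p.Prime] :
    Nontrivial (ULabc p ⊗[ZMod p] ULabc p) := by
  have F := Algebra.TensorProduct.lift (epsU p) (epsU p)
    (fun x y => Commute.all _ _)
  refine ⟨⟨1, 0, fun h => ?_⟩⟩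
  have h2 : (1 : ZMod p) = 0 := by
    have := congrArg F h
    rwa [map_one, map_zero] at this
  exact one_ne_zero h2

lemma tensor_charP (p : ℕ) [Fact p.Prime] :
    CharP (ULabc p ⊗[ZMod p] ULabc p) p := by
  haveI := tensor_nontrivial p
  exact charP_of_injective_ringHom (algebraMap (ZMod p) (ULabc p ⊗[ZMod p] ULabc p)).injective p

open MvPolynomial TrivSqZeroExt in
lemma hopf_commutes (p : ℕ) [Fact p.Prime]
    (Δ : ULabc p →ₗ[ZMod p] (ULabc p ⊗[ZMod p] ULabc p))
    (hmul : ∀ z w, Δ (z * w) = Δ z * Δ w) (h1 : Δ 1 = 1)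
    (hprim : ∀ g : ULabc p, g = inr 1 ∨ g = inl (X 0) ∨ g = inl (X 1) →
        Δ g = g ⊗ₜ[ZMod p] 1 + 1 ⊗ₜ[ZMod p] g)
    (z : ULabc p) :
    Δ (psiHopf p z) = (TensorProduct.map (psiHopf p) (psiHopf p)) (Δ z) := by
  haveI : CharP (ULabc p ⊗[ZMod p] ULabc p) p := tensor_charP p
  set DA : ULabc p →ₐ[ZMod p] (ULabc p ⊗[ZMod p] ULabc p) :=
    AlgHom.ofLinearMap Δ h1 hmul with hDA
  set MA := Algebra.TensorProduct.map (PsiAlg p) (PsiAlg p) with hMA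
  have hMA' : MA.toLinearMap = TensorProduct.map (psiHopf p) (psiHopf p) := by
    apply TensorProduct.ext'
    intro x y
    simp [hMA, PsiAlg]
  have key : DA.comp (PsiAlg p) = MA.comp DA := by
    apply AlgHom.ext_of_adjoin_eq_top (adjoin_top p)
    rintro g (rfl | rfl | rfl)
    · -- a
      simp only [AlgHom.comp_apply, hDA, AlgHom.ofLinearMap_apply]
      show Δ (psiHopf p (inr 1)) = MA (Δ (inr 1))
      rw [psiHopf_a, hprim _ (Or.inl rfl)]
      simp only [hMA, map_add, Algebra.TensorProduct.map_tmul, PsiAlg,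
        AlgHom.ofLinearMap_apply, psiHopf_a, psiHopf_one]
    · -- b
      simp only [AlgHom.comp_apply, hDA, AlgHom.ofLinearMap_apply]
      show Δ (psiHopf p (inl (X 0))) = MA (Δ (inl (X 0)))
      rw [psiHopf_b, hprim _ (Or.inr (Or.inl rfl))]
      have hsplit : (inl (X 0 + X 1 ^ p) : ULabc p)
          = inl (X 0) + inl (X 1) ^ p := by
        apply TrivSqZeroExt.ext <;> simp
      have hΔc : Δ (inl (X 1) ^ p)
          = (((inl (X 1) : ULabc p) ^ p) ⊗ₜ[ZMod p] (1 : ULabc p))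
            + ((1 : ULabc p) ⊗ₜ[ZMod p] ((inl (X 1) : ULabc p) ^ p)) := by
        have : DA ((inl (X 1) : ULabc p) ^ p) = DA (inl (X 1)) ^ p := DA.toMonoidHom.map_pow _ p
        simp only [hDA, AlgHom.ofLinearMap_apply] at this
        rw [this, hprim _ (Or.inr (Or.inr rfl))]
        rw [add_pow_char (R := ULabc p ⊗[ZMod p] ULabc p)]
        rw [Algebra.TensorProduct.tmul_pow, Algebra.TensorProduct.tmul_pow, one_pow]
      rw [hsplit, map_add, hΔc, hprim _ (Or.inr (Or.inl rfl))]
      simp only [map_add, hMA, Algebra.TensorProduct.map_tmul, PsiAlg,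
        AlgHom.ofLinearMap_apply, psiHopf_b, psiHopf_one, hsplit,
        TensorProduct.tmul_add, TensorProduct.add_tmul]
      abel
    · -- c
      simp only [AlgHom.comp_apply, hDA, AlgHom.ofLinearMap_apply]
      show Δ (psiHopf p (inl (X 1))) = MA (Δ (inl (X 1)))
      rw [psiHopf_c, hprim _ (Or.inr (Or.inr rfl))]
      simp only [hMA, map_add, Algebra.TensorProduct.map_tmul, PsiAlg,
        AlgHom.ofLinearMap_apply, psiHopf_c, psiHopf_one]
  have := AlgHom.congr_fun key z
  simp only [AlgHom.comp_apply, hDA, AlgHom.ofLinearMap_apply, PsiAlg] at this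
  rw [this, ← hMA']
  rfl

open MvPolynomial TrivSqZeroExt in
lemma not_mem_Labc (p : ℕ) [Fact p.Prime] :
    (inl (X 0 + X 1 ^ p) : ULabc p) ∉ Labc p := by
  classical
  have hp1 : p ≠ 1 := (Fact.out : p.Prime).ne_one
  set φ : ULabc p →ₗ[ZMod p] ZMod p :=
    (MvPolynomial.lcoeff (ZMod p) (Finsupp.single (1 : Fin 2) p)) ∘ₗ
      (TrivSqZeroExt.fstHom (ZMod p) _ _).toLinearMap with hφ
  have h01 : Finsupp.single (0 : Fin 2) 1 ≠ Finsupp.single (1 : Fin 2) p := by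
    intro h
    have := Finsupp.single_eq_single_iff _ _ _ _ |>.1 h
    rcases this with ⟨h, -⟩ | ⟨h, -⟩
    · exact absurd h (by decide)
    · exact one_ne_zero h
  have h11 : Finsupp.single (1 : Fin 2) 1 ≠ Finsupp.single (1 : Fin 2) p := by
    intro h
    have := Finsupp.single_eq_single_iff _ _ _ _ |>.1 h
    rcases this with ⟨-, h⟩ | ⟨h, -⟩
    · exact hp1 h.symm
    · exact one_ne_zero h
  have hker : Labc p ≤ LinearMap.ker φ := by
    rw [Labc, Submodule.span_le]
    rintro x (rfl | rfl | rfl) <;>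
      simp [hφ, lcoeff, coeff_X', h01, h11]
  intro hmem
  have h0 : φ (inl (X 0 + X 1 ^ p)) = 0 := hker hmem
  have h1 : φ (inl (X 0 + X 1 ^ p)) = 1 := by
    simp [hφ, lcoeff, coeff_X', coeff_X_pow, h01]
  rw [h1] at h0
  exact one_ne_zero h0

/-- For `p` an odd prime (and `n ≥ 1`), the map `ψ` of
`U L_ab(a,b,c)` determined by `a ↦ a`, `c ↦ c`, `b ↦ b + c^p` is a well-defined
Hopf algebra isomorphism (a bijective unital multiplicative map commuting with any
comultiplication making `a, b, c` primitive), but it is not of the form `Uθ` for any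
Lie algebra endomorphism `θ` of `L_ab(a,b,c)`: it does not even map the subspace
`L_ab(a,b,c)` into itself. -/
theorem psiHopf_not_induced (p : ℕ) [Fact p.Prime] (hp : Odd p) :
    -- ψ is a unital multiplicative bijection, i.e. an algebra isomorphism
    (psiHopf p 1 = 1) ∧
    (∀ z w : ULabc p, psiHopf p (z * w) = psiHopf p z * psiHopf p w) ∧
    Function.Bijective (psiHopf p) ∧
    -- ψ sends a ↦ a, b ↦ b + c^p, c ↦ c
    (psiHopf p (TrivSqZeroExt.inr 1) = TrivSqZeroExt.inr 1) ∧
    (psiHopf p (TrivSqZeroExt.inl (MvPolynomial.X 0))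
      = TrivSqZeroExt.inl (MvPolynomial.X 0 + (MvPolynomial.X 1) ^ p)) ∧
    (psiHopf p (TrivSqZeroExt.inl (MvPolynomial.X 1))
      = TrivSqZeroExt.inl (MvPolynomial.X 1)) ∧
    -- ψ is a morphism of Hopf algebras: it commutes with any comultiplication
    -- (a multiplicative unital map) for which a, b, c are primitive
    (∀ Δ : ULabc p →ₗ[ZMod p] (ULabc p ⊗[ZMod p] ULabc p),
      (∀ z w, Δ (z * w) = Δ z * Δ w) → Δ 1 = 1 →
      (∀ g : ULabc p, g = TrivSqZeroExt.inr 1 ∨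
          g = TrivSqZeroExt.inl (MvPolynomial.X 0) ∨
          g = TrivSqZeroExt.inl (MvPolynomial.X 1) →
        Δ g = g ⊗ₜ[ZMod p] 1 + 1 ⊗ₜ[ZMod p] g) →
      ∀ z, Δ (psiHopf p z) = (TensorProduct.map (psiHopf p) (psiHopf p)) (Δ z)) ∧
    -- but ψ is not `Uθ` for a Lie algebra endomorphism θ of `L_ab(a,b,c)`
    ¬ ∃ θ : ULabc p →ₗ[ZMod p] ULabc p,
        (∀ x ∈ Labc p, θ x ∈ Labc p) ∧ (∀ x ∈ Labc p, psiHopf p x = θ x) := by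
  refine ⟨psiHopf_one p, psiHopf_mul p, psiHopf_bij p, psiHopf_a p, psiHopf_b p,
    psiHopf_c p, hopf_commutes p, ?_⟩
  rintro ⟨θ, hθ, hagree⟩
  have hb : (TrivSqZeroExt.inl (MvPolynomial.X 0) : ULabc p) ∈ Labc p :=
    Submodule.subset_span (by simp)
  have h2 : (TrivSqZeroExt.inl (MvPolynomial.X 0 + MvPolynomial.X 1 ^ p) : ULabc p)
      ∈ Labc p := by
    rw [← psiHopf_b, hagree _ hb]
    exact hθ _ hb
  exact not_mem_Labc p h2
end
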